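/- arXiv:2110.09902 — 6 statements merged into one kernel-verified Lean document; each statement's English description precedes it below -/
import Mathlib

section
/- Composition of an order-1 convolution with an order-n convolution equals order-n convolution with an outer-convolved kernel: for finitely supported G : ℤ → ℝ, H : ℤⁿ → ℝ and signals x₁,…,xₙ : ℤ → ℝ, (G * (H * {x₁,…,xₙ}))(t) = ((G ⊛ H) * {x₁,…,xₙ})(t) for all t, where (G ⊛ H)(τ₁,…,τₙ) = ∑_l G(l) H(τ₁−l,…,τₙ−l). -/
theorem conv1_comp_convn (n : ℕ) (G : ℤ →₀ ℝ) (H : (Fin n → ℤ) →₀ ℝ)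
    (x : Fin n → ℤ → ℝ) (t : ℤ) :
    (∑ l ∈ G.support, G l * ∑ τ ∈ H.support, H τ * ∏ i, x i ((t - l) - τ i)) =
    ∑ τ ∈ (G.support ×ˢ H.support).image (fun p => fun i => p.2 i + p.1),
      (∑ l ∈ G.support, G l * H (fun i => τ i - l)) * ∏ i, x i (t - τ i) := by
  set S := (G.support ×ˢ H.support).image (fun p => fun i => p.2 i + p.1) with hS
  have key : ∀ l ∈ G.support,
      (∑ τ ∈ H.support, H τ * ∏ i, x i ((t - l) - τ i)) =
      ∑ τ ∈ S, H (fun i => τ i - l) * ∏ i, x i (t - τ i) := by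
    intro l hl
    have hinj : ∀ σ ∈ H.support, ∀ σ' ∈ H.support,
        (fun i => σ i + l) = (fun i => σ' i + l) → σ = σ' := by
      intro σ _ σ' _ h
      funext i
      have := congrFun h i
      omega
    have hsub : H.support.image (fun σ => fun i => σ i + l) ⊆ S := by
      intro τ hτ
      rw [Finset.mem_image] at hτ
      obtain ⟨σ, hσ, rfl⟩ := hτ
      rw [hS, Finset.mem_image]
      exact ⟨(l, σ), Finset.mem_product.mpr ⟨hl, hσ⟩, rfl⟩
    symm
    calc ∑ τ ∈ S, H (fun i => τ i - l) * ∏ i, x i (t - τ i)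
        = ∑ τ ∈ H.support.image (fun σ => fun i => σ i + l),
            H (fun i => τ i - l) * ∏ i, x i (t - τ i) := by
          symm
          apply Finset.sum_subset hsub
          intro τ _ hτ
          have : H (fun i => τ i - l) = 0 := by
            by_contra h
            apply hτ
            rw [Finset.mem_image]
            refine ⟨fun i => τ i - l, Finsupp.mem_support_iff.mpr h, ?_⟩
            funext i; simp
          rw [this, zero_mul]
      _ = ∑ σ ∈ H.support, H (fun i => σ i + l - l) * ∏ i, x i (t - (σ i + l)) :=
          Finset.sum_image hinj
      _ = ∑ τ ∈ H.support, H τ * ∏ i, x i ((t - l) - τ i) := by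
          apply Finset.sum_congr rfl
          intro σ _
          congr 1
          · congr 1; funext i; omega
          · apply Finset.prod_congr rfl
            intro i _
            congr 1; omega
  calc (∑ l ∈ G.support, G l * ∑ τ ∈ H.support, H τ * ∏ i, x i ((t - l) - τ i))
      = ∑ l ∈ G.support, ∑ τ ∈ S, G l * (H (fun i => τ i - l) * ∏ i, x i (t - τ i)) := by
        apply Finset.sum_congr rfl
        intro l hl
        rw [key l hl, Finset.mul_sum]
    _ = ∑ τ ∈ S, ∑ l ∈ G.support, G l * (H (fun i => τ i - l) * ∏ i, x i (t - τ i)) :=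
        Finset.sum_comm
    _ = _ := by
        apply Finset.sum_congr rfl
        intro τ _
        rw [Finset.sum_mul]
        apply Finset.sum_congr rfl
        intro l _
        ring
end

section
/- Strided convolutions compose with multiplied strides: for finitely supported kernels g, h : ℤ → ℝ, a signal x : ℤ → ℝ, and positive integers s, z, one has (g *_s (h *_z x))(t) = ((g ⊛_z h) *_{sz} x)(t) for all t, where (g *_s x)(t) = ∑_τ g(τ) x(st − τ) and (g ⊛_z h)(τ) = ∑_l g(l) h(τ − z·l). -/
theorem strided_compose (g h : ℤ →₀ ℝ) (x : ℤ → ℝ) (s z : ℤ)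
    (hs : 0 < s) (hz : 0 < z) (t : ℤ) :
    (∑ τ ∈ g.support, g τ * ∑ l ∈ h.support, h l * x (z * (s * t - τ) - l)) =
    ∑ τ ∈ (g.support ×ˢ h.support).image (fun p => z * p.1 + p.2),
      (∑ l ∈ g.support, g l * h (τ - z * l)) * x (s * z * t - τ) := by
  have key : ∀ τ : ℤ, (∑ l ∈ g.support, g l * h (τ - z * l))
      = ∑ p ∈ (g.support ×ˢ h.support).filter (fun p => z * p.1 + p.2 = τ),
        g p.1 * h p.2 := by
    intro τ
    rw [← Finset.sum_filter_of_ne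
      (p := fun l => τ - z * l ∈ h.support) (f := fun l => g l * h (τ - z * l))
      (fun l hl hne => Finsupp.mem_support_iff.mpr fun h0 => hne (by simp [h0]))]
    refine Finset.sum_bij' (fun l _ => (l, τ - z * l)) (fun p _ => p.1) ?_ ?_ ?_ ?_ ?_
    · intro l hl
      simp only [Finset.mem_filter, Finset.mem_product] at hl ⊢
      exact ⟨⟨hl.1, hl.2⟩, by ring⟩
    · intro p hp
      simp only [Finset.mem_filter, Finset.mem_product] at hp ⊢
      refine ⟨hp.1.1, ?_⟩
      have := hp.2
      have : p.2 = τ - z * p.1 := by linarith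
      rw [← this]; exact hp.1.2
    · intro l hl; rfl
    · intro p hp
      simp only [Finset.mem_filter, Finset.mem_product] at hp
      have : p.2 = τ - z * p.1 := by linarith [hp.2]
      exact Prod.ext rfl this.symm
    · intro l hl; rfl
  simp only [Finset.mul_sum]
  rw [← Finset.sum_product']
  rw [← Finset.sum_fiberwise_of_maps_to (g := fun p : ℤ × ℤ => z * p.1 + p.2)
    (fun p hp => Finset.mem_image_of_mem _ hp)]
  refine Finset.sum_congr rfl ?_
  intro τ hτ
  rw [key τ, Finset.sum_mul]
  refine Finset.sum_congr rfl ?_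
  intro p hp
  simp only [Finset.mem_filter] at hp
  have harg : z * (s * t - p.1) - p.2 = s * z * t - τ := by
    rw [← hp.2]; ring
  rw [harg]; ring
end

section
/- For a finitely supported kernel G : ℤ² → ℝ, kernels H₁ : ℤⁿ → ℝ, H₂ : ℤᵐ → ℝ, and signals x₁,…,xₙ, y₁,…,y_m : ℤ → ℝ, the order-2 convolution of G with the pair (H₁ * x⃗, H₂ * y⃗) equals the order-(n+m) convolution of the outer convolution G ⊛ {H₁, H₂} with the signals (x⃗, y⃗): for all t, ∑_{l₁,l₂} G(l₁,l₂)(H₁ * x⃗)(t−l₁)(H₂ * y⃗)(t−l₂) = ∑_{τ⃗₁,τ⃗₂} (G ⊛ {H₁,H₂})(τ⃗₁,τ⃗₂) ∏ᵢ xᵢ(t−τ_{1,i}) ∏ⱼ yⱼ(t−τ_{2,j}). -/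
theorem conv2_of_two_convs (n m : ℕ) (G : ℤ × ℤ →₀ ℝ)
    (H₁ : (Fin n → ℤ) →₀ ℝ) (H₂ : (Fin m → ℤ) →₀ ℝ)
    (x : Fin n → ℤ → ℝ) (y : Fin m → ℤ → ℝ) (t : ℤ) :
    (∑ l ∈ G.support, G l *
        (∑ τ ∈ H₁.support, H₁ τ * ∏ i, x i ((t - l.1) - τ i)) *
        (∑ τ ∈ H₂.support, H₂ τ * ∏ j, y j ((t - l.2) - τ j))) =
    ∑ τ ∈ (G.support ×ˢ (H₁.support ×ˢ H₂.support)).image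
        (fun p => ((fun i => p.2.1 i + p.1.1, fun j => p.2.2 j + p.1.2) :
          (Fin n → ℤ) × (Fin m → ℤ))),
      (∑ l ∈ G.support, G l * H₁ (fun i => τ.1 i - l.1) * H₂ (fun j => τ.2 j - l.2)) *
        (∏ i, x i (t - τ.1 i)) * ∏ j, y j (t - τ.2 j) := by
  classical
  set T := G.support ×ˢ (H₁.support ×ˢ H₂.support) with hT
  set φ : (ℤ × ℤ) × ((Fin n → ℤ) × (Fin m → ℤ)) → (Fin n → ℤ) × (Fin m → ℤ) :=
    fun p => (fun i => p.2.1 i + p.1.1, fun j => p.2.2 j + p.1.2) with hφ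
  have key : ∑ τ ∈ T.image φ,
      (∑ l ∈ G.support, G l * H₁ (fun i => τ.1 i - l.1) * H₂ (fun j => τ.2 j - l.2)) *
        (∏ i, x i (t - τ.1 i)) * ∏ j, y j (t - τ.2 j)
      = ∑ p ∈ T, G p.1 * H₁ p.2.1 * H₂ p.2.2 *
          (∏ i, x i (t - (p.2.1 i + p.1.1))) * ∏ j, y j (t - (p.2.2 j + p.1.2)) := by
    refine Finset.sum_image' _ ?_
    intro p hp
    have hfilter : ∀ q ∈ T.filter (fun q => φ q = φ p),
        G q.1 * H₁ q.2.1 * H₂ q.2.2 *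
          (∏ i, x i (t - (q.2.1 i + q.1.1))) * ∏ j, y j (t - (q.2.2 j + q.1.2))
        = G q.1 * H₁ (fun i => (φ p).1 i - q.1.1) * H₂ (fun j => (φ p).2 j - q.1.2) *
          (∏ i, x i (t - (φ p).1 i)) * ∏ j, y j (t - (φ p).2 j) := by
      intro q hq
      simp only [Finset.mem_filter] at hq
      have h1 : (fun i => (φ p).1 i) = fun i => q.2.1 i + q.1.1 := by rw [← hq.2]
      have h2 : (fun j => (φ p).2 j) = fun j => q.2.2 j + q.1.2 := by rw [← hq.2]
      have e1 : q.2.1 = fun i => (φ p).1 i - q.1.1 := by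
        funext i; have := congrFun h1 i; omega
      have e2 : q.2.2 = fun j => (φ p).2 j - q.1.2 := by
        funext j; have := congrFun h2 j; omega
      have ex : (∏ i, x i (t - (q.2.1 i + q.1.1))) = ∏ i, x i (t - (φ p).1 i) :=
        Finset.prod_congr rfl fun i _ => by
          have := congrFun h1 i; congr 1; omega
      have ey : (∏ j, y j (t - (q.2.2 j + q.1.2))) = ∏ j, y j (t - (φ p).2 j) :=
        Finset.prod_congr rfl fun j _ => by
          have := congrFun h2 j; congr 1; omega
      rw [ex, ey, e1, e2]
    rw [Finset.sum_congr rfl hfilter, ← Finset.sum_mul, ← Finset.sum_mul]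
    congr 1
    congr 1
    set S := G.support.filter (fun l => (fun i => (φ p).1 i - l.1) ∈ H₁.support ∧
        (fun j => (φ p).2 j - l.2) ∈ H₂.support) with hS
    have step1 : (∑ l ∈ G.support, G l * H₁ (fun i => (φ p).1 i - l.1) *
        H₂ (fun j => (φ p).2 j - l.2)) = ∑ l ∈ S,
          G l * H₁ (fun i => (φ p).1 i - l.1) * H₂ (fun j => (φ p).2 j - l.2) := by
      refine (Finset.sum_subset (Finset.filter_subset _ _) ?_).symm
      intro l hl hnl
      simp only [hS, Finset.mem_filter, hl, true_and, not_and_or, Finsupp.mem_support_iff,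
        not_not] at hnl
      rcases hnl with h | h <;> simp [h]
    rw [step1]
    refine Finset.sum_bij
      (fun (l : ℤ × ℤ) _ => ((l, (fun i => (φ p).1 i - l.1, fun j => (φ p).2 j - l.2)) :
        (ℤ × ℤ) × ((Fin n → ℤ) × (Fin m → ℤ)))) ?_ ?_ ?_ ?_
    · intro l hl
      simp only [hS, Finset.mem_filter] at hl
      simp only [Finset.mem_filter]
      refine ⟨?_, ?_⟩
      · simp only [hT, Finset.mem_product]
        exact ⟨hl.1, hl.2.1, hl.2.2⟩
      · have h1 : (fun i => ((φ p).1 i - l.1) + l.1) = (φ p).1 := by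
          funext i; omega
        have h2 : (fun j => ((φ p).2 j - l.2) + l.2) = (φ p).2 := by
          funext j; omega
        show ((fun i => (φ p).1 i - l.1 + l.1, fun j => (φ p).2 j - l.2 + l.2) :
          (Fin n → ℤ) × (Fin m → ℤ)) = φ p
        rw [h1, h2]
    · intro a ha b hb hab
      simp only [Prod.mk.injEq] at hab
      exact hab.1
    · intro q hq
      simp only [Finset.mem_filter, hT, Finset.mem_product] at hq
      have h1 : (fun i => (φ p).1 i) = fun i => q.2.1 i + q.1.1 := by rw [← hq.2]
      have h2 : (fun j => (φ p).2 j) = fun j => q.2.2 j + q.1.2 := by rw [← hq.2]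
      have e1 : (fun i => (φ p).1 i - q.1.1) = q.2.1 := by
        funext i; have := congrFun h1 i; omega
      have e2 : (fun j => (φ p).2 j - q.1.2) = q.2.2 := by
        funext j; have := congrFun h2 j; omega
      refine ⟨q.1, ?_, ?_⟩
      · simp only [hS, Finset.mem_filter, e1, e2]
        exact ⟨hq.1.1, hq.1.2.1, hq.1.2.2⟩
      · show (q.1, ((fun i => (φ p).1 i - q.1.1 : Fin n → ℤ),
          (fun j => (φ p).2 j - q.1.2 : Fin m → ℤ))) = q
        rw [e1, e2]
    · intro l hl
      rfl
  rw [key]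
  rw [Finset.sum_product]
  refine Finset.sum_congr rfl fun l hl => ?_
  rw [Finset.sum_product, mul_assoc, Finset.sum_mul_sum, Finset.mul_sum]
  refine Finset.sum_congr rfl fun a ha => ?_
  rw [Finset.mul_sum]
  refine Finset.sum_congr rfl fun b hb => ?_
  have ex : (∏ i, x i ((t - l.1) - a i)) = ∏ i, x i (t - (a i + l.1)) :=
    Finset.prod_congr rfl fun i _ => by congr 1; ring
  have ey : (∏ j, y j ((t - l.2) - b j)) = ∏ j, y j (t - (b j + l.2)) :=
    Finset.prod_congr rfl fun j _ => by congr 1; ring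
  rw [ex, ey]
  ring
end

section
/- Stacking two order-2 Volterra convolutions yields an order-4 Volterra convolution: given finitely supported kernels H₀ ∈ ℝ, H₁ : ℤ → ℝ, H₂ : ℤ² → ℝ and G₀ ∈ ℝ, G₁ : ℤ → ℝ, G₂ : ℤ² → ℝ, and any signal x : ℤ → ℝ, if y = H₀ + H₁*x + H₂*x², then G₀ + G₁*y + G₂*y² = ∑_{k=0}^{4} F_k * x^k, where F₀ = G₀ + H₀∑G₁ + H₀²∑G₂, F₁ = G₁⊛H₁ + ∑_{#H₀}(G₂⊛{H₀,H₁}) + ∑_{#H₀}(G₂⊛{H₁,H₀}), F₂ = G₁⊛H₂ + G₂⊛{H₁,H₁} + ∑_{#H₀}(G₂⊛{H₀,H₂}) + ∑_{#H₀}(G₂⊛{H₂,H₀}), F₃ = G₂⊛{H₁,H₂} + G₂⊛{H₂,H₁}, F₄ = G₂⊛{H₂,H₂}. -/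
lemma sum_shift {κ : Type*} [DecidableEq κ] [AddCommGroup κ]
    (T B : Finset κ) (g m : κ → ℝ) (e : κ)
    (hB : ∀ k, g k ≠ 0 → k ∈ B) (hT : ∀ k ∈ B, k + e ∈ T) :
    ∑ τ ∈ T, g (τ - e) * m τ = ∑ k ∈ B, g k * m (k + e) := by
  rw [← Finset.sum_subset (s₁ := B.image (· + e)) (h := by
      intro τ hτ; simp only [Finset.mem_image] at hτ
      obtain ⟨k, hk, rfl⟩ := hτ; exact hT k hk)
    (by intro τ _ hτ
        by_contra h
        have : τ - e ∈ B := hB _ (fun h0 => h (by rw [h0, zero_mul]))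
        exact hτ (Finset.mem_image.2 ⟨τ - e, this, by abel⟩)),
    Finset.sum_image (by intro a _ b _ h; simpa using h)]
  simp

lemma conv_sum {ι κ : Type*} [DecidableEq κ] [AddCommGroup κ]
    (S : Finset ι) (T B : Finset κ) (c : ι → ℝ) (g m : κ → ℝ) (e : ι → κ)
    (hB : ∀ k, g k ≠ 0 → k ∈ B) (hT : ∀ l ∈ S, ∀ k ∈ B, k + e l ∈ T) :
    ∑ τ ∈ T, (∑ l ∈ S, c l * g (τ - e l)) * m τ
      = ∑ l ∈ S, c l * ∑ k ∈ B, g k * m (k + e l) := by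
  simp_rw [Finset.sum_mul]
  rw [Finset.sum_comm]
  refine Finset.sum_congr rfl fun l hl => ?_
  simp_rw [mul_assoc, ← Finset.mul_sum]
  rw [sum_shift T B g m (e l) hB (hT l hl)]

theorem stack_order2_order2
    (H₀ G₀ : ℝ) (H₁ G₁ : ℤ →₀ ℝ) (H₂ G₂ : ℤ × ℤ →₀ ℝ) (x y : ℤ → ℝ)
    (hy : ∀ t, y t = H₀ + (∑ τ ∈ H₁.support, H₁ τ * x (t - τ)) +
        ∑ τ ∈ H₂.support, H₂ τ * x (t - τ.1) * x (t - τ.2)) (t : ℤ) :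
    G₀ + (∑ τ ∈ G₁.support, G₁ τ * y (t - τ)) +
      (∑ τ ∈ G₂.support, G₂ τ * y (t - τ.1) * y (t - τ.2)) =
    (G₀ + H₀ * (∑ τ ∈ G₁.support, G₁ τ) + H₀ ^ 2 * ∑ τ ∈ G₂.support, G₂ τ) +
    (∑ τ ∈ ((G₁.support ×ˢ H₁.support).image fun p => p.2 + p.1) ∪
        ((G₂.support ×ˢ H₁.support).image fun p => p.2 + p.1.2) ∪
        ((G₂.support ×ˢ H₁.support).image fun p => p.2 + p.1.1),
      ((∑ l ∈ G₁.support, G₁ l * H₁ (τ - l)) +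
       H₀ * (∑ l ∈ G₂.support, G₂ l * H₁ (τ - l.2)) +
       H₀ * (∑ l ∈ G₂.support, G₂ l * H₁ (τ - l.1))) * x (t - τ)) +
    (∑ τ ∈ ((G₁.support ×ˢ H₂.support).image fun p => (p.2.1 + p.1, p.2.2 + p.1)) ∪
        ((G₂.support ×ˢ (H₁.support ×ˢ H₁.support)).image
          fun p => (p.2.1 + p.1.1, p.2.2 + p.1.2)) ∪
        ((G₂.support ×ˢ H₂.support).image fun p => (p.2.1 + p.1.2, p.2.2 + p.1.2)) ∪
        ((G₂.support ×ˢ H₂.support).image fun p => (p.2.1 + p.1.1, p.2.2 + p.1.1)),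
      ((∑ l ∈ G₁.support, G₁ l * H₂ (τ.1 - l, τ.2 - l)) +
       (∑ l ∈ G₂.support, G₂ l * H₁ (τ.1 - l.1) * H₁ (τ.2 - l.2)) +
       H₀ * (∑ l ∈ G₂.support, G₂ l * H₂ (τ.1 - l.2, τ.2 - l.2)) +
       H₀ * (∑ l ∈ G₂.support, G₂ l * H₂ (τ.1 - l.1, τ.2 - l.1))) *
        (x (t - τ.1) * x (t - τ.2))) +
    (∑ τ ∈ ((G₂.support ×ˢ (H₁.support ×ˢ H₂.support)).image
          fun p => (p.2.1 + p.1.1, p.2.2.1 + p.1.2, p.2.2.2 + p.1.2)) ∪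
        ((G₂.support ×ˢ (H₂.support ×ˢ H₁.support)).image
          fun p => (p.2.1.1 + p.1.1, p.2.1.2 + p.1.1, p.2.2 + p.1.2)),
      ((∑ l ∈ G₂.support, G₂ l * H₁ (τ.1 - l.1) * H₂ (τ.2.1 - l.2, τ.2.2 - l.2)) +
       (∑ l ∈ G₂.support, G₂ l * H₂ (τ.1 - l.1, τ.2.1 - l.1) * H₁ (τ.2.2 - l.2))) *
        (x (t - τ.1) * x (t - τ.2.1) * x (t - τ.2.2))) +
    (∑ τ ∈ (G₂.support ×ˢ (H₂.support ×ˢ H₂.support)).image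
          (fun p => (p.2.1.1 + p.1.1, p.2.1.2 + p.1.1, p.2.2.1 + p.1.2, p.2.2.2 + p.1.2)),
      (∑ l ∈ G₂.support,
          G₂ l * H₂ (τ.1 - l.1, τ.2.1 - l.1) * H₂ (τ.2.2.1 - l.2, τ.2.2.2 - l.2)) *
        (x (t - τ.1) * x (t - τ.2.1) * x (t - τ.2.2.1) * x (t - τ.2.2.2))) := by
  classical
  have hB1 : ∀ k : ℤ, H₁ k ≠ 0 → k ∈ H₁.support := fun k hk => Finsupp.mem_support_iff.2 hk
  have hB2 : ∀ k : ℤ × ℤ, H₂ k ≠ 0 → k ∈ H₂.support := fun k hk => Finsupp.mem_support_iff.2 hk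
  have hB11 : ∀ k : ℤ × ℤ, H₁ k.1 * H₁ k.2 ≠ 0 → k ∈ H₁.support ×ˢ H₁.support := fun k h =>
    Finset.mem_product.2 ⟨Finsupp.mem_support_iff.2 (left_ne_zero_of_mul h),
      Finsupp.mem_support_iff.2 (right_ne_zero_of_mul h)⟩
  have hB12 : ∀ k : ℤ × ℤ × ℤ, H₁ k.1 * H₂ k.2 ≠ 0 → k ∈ H₁.support ×ˢ H₂.support := fun k h =>
    Finset.mem_product.2 ⟨Finsupp.mem_support_iff.2 (left_ne_zero_of_mul h),
      Finsupp.mem_support_iff.2 (right_ne_zero_of_mul h)⟩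
  have hB21 : ∀ k : ℤ × ℤ × ℤ, H₂ (k.1, k.2.1) * H₁ k.2.2 ≠ 0 →
      k ∈ (H₂.support ×ˢ H₁.support).image (fun q => (q.1.1, q.1.2, q.2)) := fun k h =>
    Finset.mem_image.2 ⟨((k.1, k.2.1), k.2.2),
      Finset.mem_product.2 ⟨Finsupp.mem_support_iff.2 (left_ne_zero_of_mul h),
        Finsupp.mem_support_iff.2 (right_ne_zero_of_mul h)⟩, rfl⟩
  have hB22 : ∀ k : ℤ × ℤ × ℤ × ℤ, H₂ (k.1, k.2.1) * H₂ (k.2.2.1, k.2.2.2) ≠ 0 →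
      k ∈ (H₂.support ×ˢ H₂.support).image (fun q => (q.1.1, q.1.2, q.2.1, q.2.2)) := fun k h =>
    Finset.mem_image.2 ⟨((k.1, k.2.1), (k.2.2.1, k.2.2.2)),
      Finset.mem_product.2 ⟨Finsupp.mem_support_iff.2 (left_ne_zero_of_mul h),
        Finsupp.mem_support_iff.2 (right_ne_zero_of_mul h)⟩, rfl⟩
  set T1 : Finset ℤ := ((G₁.support ×ˢ H₁.support).image fun p => p.2 + p.1) ∪
        ((G₂.support ×ˢ H₁.support).image fun p => p.2 + p.1.2) ∪
        ((G₂.support ×ˢ H₁.support).image fun p => p.2 + p.1.1) with hT1def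
  set T2 : Finset (ℤ × ℤ) := ((G₁.support ×ˢ H₂.support).image fun p => (p.2.1 + p.1, p.2.2 + p.1)) ∪
        ((G₂.support ×ˢ (H₁.support ×ˢ H₁.support)).image
          fun p => (p.2.1 + p.1.1, p.2.2 + p.1.2)) ∪
        ((G₂.support ×ˢ H₂.support).image fun p => (p.2.1 + p.1.2, p.2.2 + p.1.2)) ∪
        ((G₂.support ×ˢ H₂.support).image fun p => (p.2.1 + p.1.1, p.2.2 + p.1.1)) with hT2def
  set T3 : Finset (ℤ × ℤ × ℤ) := ((G₂.support ×ˢ (H₁.support ×ˢ H₂.support)).image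
          fun p => (p.2.1 + p.1.1, p.2.2.1 + p.1.2, p.2.2.2 + p.1.2)) ∪
        ((G₂.support ×ˢ (H₂.support ×ˢ H₁.support)).image
          fun p => (p.2.1.1 + p.1.1, p.2.1.2 + p.1.1, p.2.2 + p.1.2)) with hT3def
  set T4 : Finset (ℤ × ℤ × ℤ × ℤ) := (G₂.support ×ˢ (H₂.support ×ˢ H₂.support)).image
          (fun p => (p.2.1.1 + p.1.1, p.2.1.2 + p.1.1, p.2.2.1 + p.1.2, p.2.2.2 + p.1.2)) with hT4def
  -- piece lemmas
  have p1a : ∑ τ ∈ T1, (∑ l ∈ G₁.support, G₁ l * H₁ (τ - l)) * x (t - τ)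
      = ∑ l ∈ G₁.support, G₁ l * ∑ k ∈ H₁.support, H₁ k * x (t - (k + l)) := by
    exact conv_sum G₁.support T1 H₁.support (fun l => G₁ l) (fun k => H₁ k)
      (fun τ => x (t - τ)) (fun l => l) hB1
      (fun l hl k hk => by
        rw [hT1def]
        exact Finset.mem_union_left _ (Finset.mem_union_left _
          (Finset.mem_image.2 ⟨(l, k), Finset.mem_product.2 ⟨hl, hk⟩, rfl⟩)))

  have p1b : ∑ τ ∈ T1, H₀ * (∑ l ∈ G₂.support, G₂ l * H₁ (τ - l.2)) * x (t - τ)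
      = H₀ * ∑ l ∈ G₂.support, G₂ l * ∑ k ∈ H₁.support, H₁ k * x (t - (k + l.2)) := by
    have h := conv_sum G₂.support T1 H₁.support (fun l => G₂ l) (fun k => H₁ k)
      (fun τ => x (t - τ)) (fun l => l.2) hB1
      (fun l hl k hk => by
        rw [hT1def]
        exact Finset.mem_union_left _ (Finset.mem_union_right _
          (Finset.mem_image.2 ⟨(l, k), Finset.mem_product.2 ⟨hl, hk⟩, rfl⟩)))
    rw [← h, Finset.mul_sum]
    exact Finset.sum_congr rfl fun τ _ => by ring
  have p1c : ∑ τ ∈ T1, H₀ * (∑ l ∈ G₂.support, G₂ l * H₁ (τ - l.1)) * x (t - τ)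
      = H₀ * ∑ l ∈ G₂.support, G₂ l * ∑ k ∈ H₁.support, H₁ k * x (t - (k + l.1)) := by
    have h := conv_sum G₂.support T1 H₁.support (fun l => G₂ l) (fun k => H₁ k)
      (fun τ => x (t - τ)) (fun l => l.1) hB1
      (fun l hl k hk => by
        rw [hT1def]
        exact Finset.mem_union_right _
          (Finset.mem_image.2 ⟨(l, k), Finset.mem_product.2 ⟨hl, hk⟩, rfl⟩))
    rw [← h, Finset.mul_sum]
    exact Finset.sum_congr rfl fun τ _ => by ring
  have p2a : ∑ τ ∈ T2, (∑ l ∈ G₁.support, G₁ l * H₂ (τ.1 - l, τ.2 - l)) * (x (t - τ.1) * x (t - τ.2))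
      = ∑ l ∈ G₁.support, G₁ l * ∑ k ∈ H₂.support,
          H₂ k * (x (t - (k.1 + l)) * x (t - (k.2 + l))) := by
    exact conv_sum G₁.support T2 H₂.support (fun l => G₁ l) (fun k => H₂ k)
      (fun τ => x (t - τ.1) * x (t - τ.2)) (fun l => (l, l)) hB2
      (fun l hl k hk => by
        rw [hT2def]
        exact Finset.mem_union_left _ (Finset.mem_union_left _ (Finset.mem_union_left _
          (Finset.mem_image.2 ⟨(l, k), Finset.mem_product.2 ⟨hl, hk⟩, rfl⟩)))
      )
  have p2b : ∑ τ ∈ T2, (∑ l ∈ G₂.support, G₂ l * H₁ (τ.1 - l.1) * H₁ (τ.2 - l.2)) * (x (t - τ.1) * x (t - τ.2))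
      = ∑ l ∈ G₂.support, G₂ l * ∑ k ∈ H₁.support ×ˢ H₁.support,
          H₁ k.1 * H₁ k.2 * (x (t - (k.1 + l.1)) * x (t - (k.2 + l.2))) := by
    have h := conv_sum G₂.support T2 (H₁.support ×ˢ H₁.support) (fun l => G₂ l)
      (fun k : ℤ × ℤ => H₁ k.1 * H₁ k.2)
      (fun τ => x (t - τ.1) * x (t - τ.2)) (fun l => l) hB11
      (fun l hl k hk => by
        rw [hT2def]
        exact Finset.mem_union_left _ (Finset.mem_union_left _ (Finset.mem_union_right _
          (Finset.mem_image.2 ⟨(l, k), Finset.mem_product.2 ⟨hl, hk⟩, rfl⟩))))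
    refine Eq.trans (Finset.sum_congr rfl fun τ _ => ?_) h
    congr 1
    exact Finset.sum_congr rfl fun l _ => mul_assoc _ _ _
  have p2c : ∑ τ ∈ T2, H₀ * (∑ l ∈ G₂.support, G₂ l * H₂ (τ.1 - l.2, τ.2 - l.2)) * (x (t - τ.1) * x (t - τ.2))
      = H₀ * ∑ l ∈ G₂.support, G₂ l * ∑ k ∈ H₂.support,
          H₂ k * (x (t - (k.1 + l.2)) * x (t - (k.2 + l.2))) := by
    have h := conv_sum G₂.support T2 H₂.support (fun l => G₂ l) (fun k => H₂ k)
      (fun τ => x (t - τ.1) * x (t - τ.2)) (fun l => (l.2, l.2)) hB2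
      (fun l hl k hk => by
        rw [hT2def]
        exact Finset.mem_union_left _ (Finset.mem_union_right _
          (Finset.mem_image.2 ⟨(l, k), Finset.mem_product.2 ⟨hl, hk⟩, rfl⟩)))
    simp only [Prod.sub_def, Prod.add_def] at h
    rw [← h, Finset.mul_sum]
    exact Finset.sum_congr rfl fun τ _ => by ring
  have p2d : ∑ τ ∈ T2, H₀ * (∑ l ∈ G₂.support, G₂ l * H₂ (τ.1 - l.1, τ.2 - l.1)) * (x (t - τ.1) * x (t - τ.2))
      = H₀ * ∑ l ∈ G₂.support, G₂ l * ∑ k ∈ H₂.support,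
          H₂ k * (x (t - (k.1 + l.1)) * x (t - (k.2 + l.1))) := by
    have h := conv_sum G₂.support T2 H₂.support (fun l => G₂ l) (fun k => H₂ k)
      (fun τ => x (t - τ.1) * x (t - τ.2)) (fun l => (l.1, l.1)) hB2
      (fun l hl k hk => by
        rw [hT2def]
        exact Finset.mem_union_right _
          (Finset.mem_image.2 ⟨(l, k), Finset.mem_product.2 ⟨hl, hk⟩, rfl⟩))
    simp only [Prod.sub_def, Prod.add_def] at h
    rw [← h, Finset.mul_sum]
    exact Finset.sum_congr rfl fun τ _ => by ring
  have p3a : ∑ τ ∈ T3, (∑ l ∈ G₂.support, G₂ l * H₁ (τ.1 - l.1) * H₂ (τ.2.1 - l.2, τ.2.2 - l.2)) *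
        (x (t - τ.1) * x (t - τ.2.1) * x (t - τ.2.2))
      = ∑ l ∈ G₂.support, G₂ l * ∑ k ∈ H₁.support ×ˢ H₂.support,
          H₁ k.1 * H₂ k.2 * (x (t - (k.1 + l.1)) * x (t - (k.2.1 + l.2)) * x (t - (k.2.2 + l.2))) := by
    have h := conv_sum G₂.support T3 (H₁.support ×ˢ H₂.support) (fun l => G₂ l)
      (fun k : ℤ × ℤ × ℤ => H₁ k.1 * H₂ k.2)
      (fun τ => x (t - τ.1) * x (t - τ.2.1) * x (t - τ.2.2)) (fun l => (l.1, l.2, l.2)) hB12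
      (fun l hl k hk => by
        rw [hT3def]
        exact Finset.mem_union_left _
          (Finset.mem_image.2 ⟨(l, k), Finset.mem_product.2 ⟨hl, hk⟩, rfl⟩))
    refine Eq.trans (Finset.sum_congr rfl fun τ _ => ?_) h
    congr 1
    exact Finset.sum_congr rfl fun l _ => mul_assoc _ _ _
  have p3b : ∑ τ ∈ T3, (∑ l ∈ G₂.support, G₂ l * H₂ (τ.1 - l.1, τ.2.1 - l.1) * H₁ (τ.2.2 - l.2)) *
        (x (t - τ.1) * x (t - τ.2.1) * x (t - τ.2.2))
      = ∑ l ∈ G₂.support, G₂ l * ∑ q ∈ H₂.support ×ˢ H₁.support,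
          H₂ q.1 * H₁ q.2 * (x (t - (q.1.1 + l.1)) * x (t - (q.1.2 + l.1)) * x (t - (q.2 + l.2))) := by
    have h := conv_sum G₂.support T3 ((H₂.support ×ˢ H₁.support).image (fun q => (q.1.1, q.1.2, q.2)))
      (fun l => G₂ l) (fun k : ℤ × ℤ × ℤ => H₂ (k.1, k.2.1) * H₁ k.2.2)
      (fun τ => x (t - τ.1) * x (t - τ.2.1) * x (t - τ.2.2)) (fun l => (l.1, l.1, l.2)) hB21
      (fun l hl k hk => by
        obtain ⟨q, hq, rfl⟩ := Finset.mem_image.1 hk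
        rw [hT3def]
        exact Finset.mem_union_right _
          (Finset.mem_image.2 ⟨(l, q), Finset.mem_product.2 ⟨hl, hq⟩, rfl⟩))
    refine Eq.trans (Finset.sum_congr rfl fun τ _ => ?_) (h.trans ?_)
    · congr 1
      exact Finset.sum_congr rfl fun l _ => mul_assoc _ _ _
    · refine Finset.sum_congr rfl fun l _ => ?_
      congr 1
      rw [Finset.sum_image (by
        intro a _ b _ hab
        simpa [Prod.ext_iff, and_assoc] using hab)]
      exact Finset.sum_congr rfl fun q _ => rfl
  have p4 : ∑ τ ∈ T4, (∑ l ∈ G₂.support,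
          G₂ l * H₂ (τ.1 - l.1, τ.2.1 - l.1) * H₂ (τ.2.2.1 - l.2, τ.2.2.2 - l.2)) *
        (x (t - τ.1) * x (t - τ.2.1) * x (t - τ.2.2.1) * x (t - τ.2.2.2))
      = ∑ l ∈ G₂.support, G₂ l * ∑ q ∈ H₂.support ×ˢ H₂.support,
          H₂ q.1 * H₂ q.2 * (x (t - (q.1.1 + l.1)) * x (t - (q.1.2 + l.1)) *
            x (t - (q.2.1 + l.2)) * x (t - (q.2.2 + l.2))) := by
    have h := conv_sum G₂.support T4
      ((H₂.support ×ˢ H₂.support).image (fun q => (q.1.1, q.1.2, q.2.1, q.2.2)))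
      (fun l => G₂ l) (fun k : ℤ × ℤ × ℤ × ℤ => H₂ (k.1, k.2.1) * H₂ (k.2.2.1, k.2.2.2))
      (fun τ => x (t - τ.1) * x (t - τ.2.1) * x (t - τ.2.2.1) * x (t - τ.2.2.2))
      (fun l => (l.1, l.1, l.2, l.2)) hB22
      (fun l hl k hk => by
        obtain ⟨q, hq, rfl⟩ := Finset.mem_image.1 hk
        rw [hT4def]
        exact Finset.mem_image.2 ⟨(l, q), Finset.mem_product.2 ⟨hl, hq⟩, rfl⟩)
    refine Eq.trans (Finset.sum_congr rfl fun τ _ => ?_) (h.trans ?_)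
    · congr 1
      exact Finset.sum_congr rfl fun l _ => mul_assoc _ _ _
    · refine Finset.sum_congr rfl fun l _ => ?_
      congr 1
      rw [Finset.sum_image (by
        intro a _ b _ hab
        simpa [Prod.ext_iff, and_assoc] using hab)]
      exact Finset.sum_congr rfl fun q _ => rfl

  have hy' : ∀ s : ℤ, y (t - s) = H₀ + (∑ k ∈ H₁.support, H₁ k * x (t - (k + s))) +
      ∑ k ∈ H₂.support, H₂ k * (x (t - (k.1 + s)) * x (t - (k.2 + s))) := by
    intro s
    rw [hy]
    congr 1
    · congr 1
      exact Finset.sum_congr rfl fun k _ => by rw [show t - s - k = t - (k + s) by ring]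
    · exact Finset.sum_congr rfl fun k _ => by
        rw [show t - s - k.1 = t - (k.1 + s) by ring, show t - s - k.2 = t - (k.2 + s) by ring,
          mul_assoc]
  have L1 : ∑ τ ∈ G₁.support, G₁ τ * y (t - τ) = H₀ * (∑ τ ∈ G₁.support, G₁ τ) +
      (∑ l ∈ G₁.support, G₁ l * ∑ k ∈ H₁.support, H₁ k * x (t - (k + l))) +
      ∑ l ∈ G₁.support, G₁ l * ∑ k ∈ H₂.support,
        H₂ k * (x (t - (k.1 + l)) * x (t - (k.2 + l))) := by
    rw [Finset.mul_sum, ← Finset.sum_add_distrib, ← Finset.sum_add_distrib]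
    exact Finset.sum_congr rfl fun l _ => by rw [hy' l]; ring
  have hAA : ∀ a b : ℤ, (∑ k ∈ H₁.support, H₁ k * x (t - (k + a))) *
        (∑ k ∈ H₁.support, H₁ k * x (t - (k + b)))
      = ∑ k ∈ H₁.support ×ˢ H₁.support,
          H₁ k.1 * H₁ k.2 * (x (t - (k.1 + a)) * x (t - (k.2 + b))) := by
    intro a b
    rw [Finset.sum_mul_sum, Finset.sum_product]
    exact Finset.sum_congr rfl fun k _ => Finset.sum_congr rfl fun k' _ => by ring
  have hAB : ∀ a b : ℤ, (∑ k ∈ H₁.support, H₁ k * x (t - (k + a))) *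
        (∑ k ∈ H₂.support, H₂ k * (x (t - (k.1 + b)) * x (t - (k.2 + b))))
      = ∑ k ∈ H₁.support ×ˢ H₂.support,
          H₁ k.1 * H₂ k.2 * (x (t - (k.1 + a)) * x (t - (k.2.1 + b)) * x (t - (k.2.2 + b))) := by
    intro a b
    rw [Finset.sum_mul_sum, Finset.sum_product]
    exact Finset.sum_congr rfl fun k _ => Finset.sum_congr rfl fun k' _ => by ring
  have hBA : ∀ a b : ℤ, (∑ k ∈ H₂.support, H₂ k * (x (t - (k.1 + a)) * x (t - (k.2 + a)))) *
        (∑ k ∈ H₁.support, H₁ k * x (t - (k + b)))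
      = ∑ q ∈ H₂.support ×ˢ H₁.support,
          H₂ q.1 * H₁ q.2 * (x (t - (q.1.1 + a)) * x (t - (q.1.2 + a)) * x (t - (q.2 + b))) := by
    intro a b
    rw [Finset.sum_mul_sum, Finset.sum_product]
    exact Finset.sum_congr rfl fun k _ => Finset.sum_congr rfl fun k' _ => by ring
  have hBB : ∀ a b : ℤ, (∑ k ∈ H₂.support, H₂ k * (x (t - (k.1 + a)) * x (t - (k.2 + a)))) *
        (∑ k ∈ H₂.support, H₂ k * (x (t - (k.1 + b)) * x (t - (k.2 + b))))
      = ∑ q ∈ H₂.support ×ˢ H₂.support,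
          H₂ q.1 * H₂ q.2 * (x (t - (q.1.1 + a)) * x (t - (q.1.2 + a)) *
            x (t - (q.2.1 + b)) * x (t - (q.2.2 + b))) := by
    intro a b
    rw [Finset.sum_mul_sum, Finset.sum_product]
    exact Finset.sum_congr rfl fun k _ => Finset.sum_congr rfl fun k' _ => by ring
  have expand : ∀ l : ℤ × ℤ, G₂ l * y (t - l.1) * y (t - l.2) =
      G₂ l * H₀ ^ 2 +
      H₀ * (G₂ l * ∑ k ∈ H₁.support, H₁ k * x (t - (k + l.2))) +
      H₀ * (G₂ l * ∑ k ∈ H₁.support, H₁ k * x (t - (k + l.1))) +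
      G₂ l * (∑ k ∈ H₁.support ×ˢ H₁.support,
          H₁ k.1 * H₁ k.2 * (x (t - (k.1 + l.1)) * x (t - (k.2 + l.2)))) +
      H₀ * (G₂ l * ∑ k ∈ H₂.support, H₂ k * (x (t - (k.1 + l.2)) * x (t - (k.2 + l.2)))) +
      H₀ * (G₂ l * ∑ k ∈ H₂.support, H₂ k * (x (t - (k.1 + l.1)) * x (t - (k.2 + l.1)))) +
      G₂ l * (∑ k ∈ H₁.support ×ˢ H₂.support,
          H₁ k.1 * H₂ k.2 * (x (t - (k.1 + l.1)) * x (t - (k.2.1 + l.2)) * x (t - (k.2.2 + l.2)))) +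
      G₂ l * (∑ q ∈ H₂.support ×ˢ H₁.support,
          H₂ q.1 * H₁ q.2 * (x (t - (q.1.1 + l.1)) * x (t - (q.1.2 + l.1)) * x (t - (q.2 + l.2)))) +
      G₂ l * (∑ q ∈ H₂.support ×ˢ H₂.support,
          H₂ q.1 * H₂ q.2 * (x (t - (q.1.1 + l.1)) * x (t - (q.1.2 + l.1)) *
            x (t - (q.2.1 + l.2)) * x (t - (q.2.2 + l.2)))) := by
    intro l
    rw [mul_assoc, hy' l.1, hy' l.2, ← hAA l.1 l.2, ← hAB l.1 l.2, ← hBA l.1 l.2, ← hBB l.1 l.2]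
    ring
  have L2 : ∑ τ ∈ G₂.support, G₂ τ * y (t - τ.1) * y (t - τ.2) =
      H₀ ^ 2 * (∑ τ ∈ G₂.support, G₂ τ) +
      H₀ * (∑ l ∈ G₂.support, G₂ l * ∑ k ∈ H₁.support, H₁ k * x (t - (k + l.2))) +
      H₀ * (∑ l ∈ G₂.support, G₂ l * ∑ k ∈ H₁.support, H₁ k * x (t - (k + l.1))) +
      (∑ l ∈ G₂.support, G₂ l * ∑ k ∈ H₁.support ×ˢ H₁.support,
          H₁ k.1 * H₁ k.2 * (x (t - (k.1 + l.1)) * x (t - (k.2 + l.2)))) +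
      H₀ * (∑ l ∈ G₂.support, G₂ l * ∑ k ∈ H₂.support,
          H₂ k * (x (t - (k.1 + l.2)) * x (t - (k.2 + l.2)))) +
      H₀ * (∑ l ∈ G₂.support, G₂ l * ∑ k ∈ H₂.support,
          H₂ k * (x (t - (k.1 + l.1)) * x (t - (k.2 + l.1)))) +
      (∑ l ∈ G₂.support, G₂ l * ∑ k ∈ H₁.support ×ˢ H₂.support,
          H₁ k.1 * H₂ k.2 * (x (t - (k.1 + l.1)) * x (t - (k.2.1 + l.2)) * x (t - (k.2.2 + l.2)))) +
      (∑ l ∈ G₂.support, G₂ l * ∑ q ∈ H₂.support ×ˢ H₁.support,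
          H₂ q.1 * H₁ q.2 * (x (t - (q.1.1 + l.1)) * x (t - (q.1.2 + l.1)) * x (t - (q.2 + l.2)))) +
      ∑ l ∈ G₂.support, G₂ l * ∑ q ∈ H₂.support ×ˢ H₂.support,
          H₂ q.1 * H₂ q.2 * (x (t - (q.1.1 + l.1)) * x (t - (q.1.2 + l.1)) *
            x (t - (q.2.1 + l.2)) * x (t - (q.2.2 + l.2))) := by
    refine (Finset.sum_congr rfl fun l _ => expand l).trans ?_
    simp only [Finset.sum_add_distrib, ← Finset.mul_sum]
    rw [← Finset.sum_mul]
    ring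
  simp only [add_mul, Finset.sum_add_distrib]
  rw [p1a, p1b, p1c, p2a, p2b, p2c, p2d, p3a, p3b, p4, L1, L2]
  ring
end

section
/- Perturbation bound for an order-n convolution term: for a finitely supported symmetric kernel Hₙ : ℤⁿ → ℝ and finitely supported signals x, y : ℤ → ℝ, ‖Hₙ * (x+y)ⁿ − Hₙ * xⁿ‖₂ ≤ ‖Hₙ‖₂ · ∑_{k=0}^{n−1} C(n,k) ‖x‖₁ᵏ ‖y‖₁^{n−k}, where C(n,k) is the binomial coefficient. -/
theorem perturbation_term_bound (n : ℕ) (H : (Fin n → ℤ) →₀ ℝ)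
    (hsym : ∀ σ : Equiv.Perm (Fin n), ∀ τ : Fin n → ℤ, H (τ ∘ σ) = H τ)
    (x y : ℤ →₀ ℝ) :
    (∑' t : ℤ,
        ((∑ τ ∈ H.support, H τ * ∏ i, (x (t - τ i) + y (t - τ i))) -
          ∑ τ ∈ H.support, H τ * ∏ i, x (t - τ i)) ^ 2) ≤
    (Real.sqrt (∑ τ ∈ H.support, (H τ) ^ 2) *
      ∑ k ∈ Finset.range n, (n.choose k : ℝ) *
        (∑ a ∈ x.support, |x a|) ^ k * (∑ a ∈ y.support, |y a|) ^ (n - k)) ^ 2 := by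
  classical
  rcases Nat.eq_zero_or_pos n with hn | hn
  · subst hn
    simp
  have i₀ : Fin n := ⟨0, hn⟩
  set X : ℝ := ∑ a ∈ x.support, |x a| with hX
  set Y : ℝ := ∑ a ∈ y.support, |y a| with hY
  set sH : ℝ := Real.sqrt (∑ τ ∈ H.support, (H τ) ^ 2) with hsH
  set R : ℝ := ∑ k ∈ Finset.range n, (n.choose k : ℝ) * X ^ k * Y ^ (n - k) with hR
  set D : ℤ → ℝ := fun t =>
      (∑ τ ∈ H.support, H τ * ∏ i, (x (t - τ i) + y (t - τ i))) -
        ∑ τ ∈ H.support, H τ * ∏ i, x (t - τ i) with hD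
  -- the finite support of D
  set T : Finset ℤ :=
      Finset.image (fun p : (Fin n → ℤ) × ℤ => p.1 i₀ + p.2)
        (H.support ×ˢ (x.support ∪ y.support)) with hT
  have hD0 : ∀ t ∉ T, D t = 0 := by
    intro t ht
    by_contra hne
    have h1 : ∃ τ ∈ H.support,
        H τ * ∏ i, (x (t - τ i) + y (t - τ i)) - H τ * ∏ i, x (t - τ i) ≠ 0 := by
      by_contra hall
      push_neg at hall
      apply hne
      have h0 : ∑ τ ∈ H.support,
          (H τ * ∏ i, (x (t - τ i) + y (t - τ i)) - H τ * ∏ i, x (t - τ i)) = 0 :=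
        Finset.sum_eq_zero hall
      rw [hD]
      simpa [Finset.sum_sub_distrib] using h0
    obtain ⟨τ, hτ, hτne⟩ := h1
    have h2 : t - τ i₀ ∈ x.support ∪ y.support := by
      have hor : (∏ i, (x (t - τ i) + y (t - τ i))) ≠ 0 ∨ (∏ i, x (t - τ i)) ≠ 0 := by
        by_contra hc
        push_neg at hc
        apply hτne
        rw [hc.1, hc.2]; ring
      rcases hor with h | h
      · have := Finset.prod_ne_zero_iff.mp h i₀ (Finset.mem_univ _)
        rcases (by by_contra hc; push_neg at hc; apply this; rw [hc.1, hc.2]; ring :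
            x (t - τ i₀) ≠ 0 ∨ y (t - τ i₀) ≠ 0) with h' | h'
        · exact Finset.mem_union_left _ (Finsupp.mem_support_iff.mpr h')
        · exact Finset.mem_union_right _ (Finsupp.mem_support_iff.mpr h')
      · have := Finset.prod_ne_zero_iff.mp h i₀ (Finset.mem_univ _)
        exact Finset.mem_union_left _ (Finsupp.mem_support_iff.mpr this)
    exact ht (by
      rw [hT]
      refine Finset.mem_image.mpr ⟨(τ, t - τ i₀), Finset.mk_mem_product hτ h2, by ring⟩)
  have htsum : (∑' t : ℤ, D t ^ 2) = ∑ t ∈ T, D t ^ 2 :=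
    tsum_eq_sum (fun t ht => by rw [hD0 t ht]; ring)
  show (∑' t : ℤ, D t ^ 2) ≤ (sH * R) ^ 2
  rw [htsum]
  -- move to EuclideanSpace
  set E := (WithLp.linearEquiv 2 ℝ (↥T → ℝ)).symm with hE
  have hnormE : ∀ u : ↥T → ℝ, ‖E u‖ = Real.sqrt (∑ t : ↥T, u t ^ 2) := by
    intro u
    rw [EuclideanSpace.norm_eq]
    congr 1
    exact Finset.sum_congr rfl fun t _ => by
      simp [hE, WithLp.linearEquiv, Real.norm_eq_abs, sq_abs]
  have hsum_eq : ∑ t ∈ T, D t ^ 2 = ‖E (fun t : ↥T => D ↑t)‖ ^ 2 := by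
    rw [hnormE, Real.sq_sqrt (by positivity), ← Finset.sum_coe_sort T (fun t => D t ^ 2)]
  rw [hsum_eq]
  have hXnn : 0 ≤ X := Finset.sum_nonneg fun a _ => abs_nonneg _
  have hYnn : 0 ≤ Y := Finset.sum_nonneg fun a _ => abs_nonneg _
  have hsHnn : 0 ≤ sH := Real.sqrt_nonneg _
  -- main norm bound
  have hmain : ‖E (fun t : ↥T => D ↑t)‖ ≤ sH * R := by
    set w : Finset (Fin n) → Fin n → ℤ →₀ ℝ := fun S i => if i ∈ S then x else y with hw
    set 𝒮 : Finset (Finset (Fin n)) := Finset.univ.powerset.erase Finset.univ with h𝒮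
    set fS : Finset (Fin n) → ↥T → ℝ :=
      fun S t => ∑ τ ∈ H.support, H τ * ∏ i, (w S i) ((t : ℤ) - τ i) with hfS
    have hprod : ∀ (v : Fin n → ℤ) (S : Finset (Fin n)),
        ∏ i, (w S i) (v i) = (∏ i ∈ S, x (v i)) * ∏ i ∈ Finset.univ \ S, y (v i) := by
      intro v S
      have h1 : ∀ i : Fin n, (w S i) (v i) = if i ∈ S then x (v i) else y (v i) := by
        intro i; simp only [hw]; split <;> rfl
      rw [Finset.prod_congr rfl fun i _ => h1 i, Finset.prod_ite]
      congr 1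
      · apply Finset.prod_congr _ fun i _ => rfl
        ext i; simp
      · apply Finset.prod_congr _ fun i _ => rfl
        ext i; simp
    have hdecomp : (fun t : ↥T => D ↑t) = ∑ S ∈ 𝒮, fS S := by
      funext t
      rw [Finset.sum_apply]
      set u : ℤ := (t : ℤ) with hu
      have hτ : ∀ τ : Fin n → ℤ,
          H τ * ∏ i, (x (u - τ i) + y (u - τ i)) - H τ * ∏ i, x (u - τ i)
            = ∑ S ∈ 𝒮, H τ * ∏ i, (w S i) (u - τ i) := by
        intro τ
        have hb : ∏ i, (x (u - τ i) + y (u - τ i))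
            = ∑ S ∈ Finset.univ.powerset, ∏ i, (w S i) (u - τ i) := by
          rw [Finset.prod_add]
          exact Finset.sum_congr rfl fun S _ => (hprod _ S).symm
        have hun : ∏ i, (w Finset.univ i) (u - τ i) = ∏ i, x (u - τ i) := by
          refine Finset.prod_congr rfl fun i _ => ?_
          simp [hw]
        rw [hb, ← Finset.sum_erase_add Finset.univ.powerset _
              (Finset.mem_powerset_self Finset.univ), hun, ← h𝒮,
            mul_add, add_sub_cancel_right, Finset.mul_sum]
      have hDu : D u = ∑ τ ∈ H.support,
          (H τ * ∏ i, (x (u - τ i) + y (u - τ i)) - H τ * ∏ i, x (u - τ i)) := by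
        rw [Finset.sum_sub_distrib]
      rw [hDu, Finset.sum_congr rfl fun τ _ => hτ τ]
      exact Finset.sum_comm
    have hfSbound : ∀ S : Finset (Fin n),
        ‖E (fS S)‖ ≤ sH * (X ^ S.card * Y ^ (n - S.card)) := by
      intro S
      set P := Fintype.piFinset (fun _ : Fin n => x.support ∪ y.support) with hP
      set c : (Fin n → ℤ) → ℝ := fun a => ∏ i, (w S i) (a i) with hc
      set g : (Fin n → ℤ) → ↥T → ℝ := fun a t => H (fun i => (t : ℤ) - a i) with hg
      have hcz : ∀ a : Fin n → ℤ, a ∉ P → c a = 0 := by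
        intro a ha
        rw [Fintype.mem_piFinset] at ha
        push_neg at ha
        obtain ⟨i, hi⟩ := ha
        refine Finset.prod_eq_zero (Finset.mem_univ i) ?_
        have hx0 : x (a i) = 0 :=
          Finsupp.notMem_support_iff.mp fun h => hi (Finset.mem_union_left _ h)
        have hy0 : y (a i) = 0 :=
          Finsupp.notMem_support_iff.mp fun h => hi (Finset.mem_union_right _ h)
        simp only [hw]; split <;> assumption
      have hkey : ∀ u : ℤ, ∑ τ ∈ H.support, H τ * ∏ i, (w S i) (u - τ i)
          = ∑ a ∈ P, c a * H (fun i => u - a i) := by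
        intro u
        have hinv : ∀ v : Fin n → ℤ, (fun i => u - (fun j => u - v j) i) = v := by
          intro v; funext i; ring
        set inv : (Fin n → ℤ) → (Fin n → ℤ) := fun τ i => u - τ i with hinvdef
        have hstep1 : ∑ τ ∈ H.support, H τ * ∏ i, (w S i) (u - τ i)
            = ∑ τ ∈ H.support ∪ P.image inv, H τ * ∏ i, (w S i) (u - τ i) := by
          refine Finset.sum_subset Finset.subset_union_left fun τ _ hτ => ?_
          have : H τ = 0 := Finsupp.notMem_support_iff.mp hτ
          rw [this, zero_mul]
        have hstep2 : ∑ τ ∈ H.support ∪ P.image inv, H τ * ∏ i, (w S i) (u - τ i)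
            = ∑ a ∈ H.support.image inv ∪ P, c a * H (inv a) := by
          refine Finset.sum_nbij' inv inv ?_ ?_ ?_ ?_ ?_
          · intro τ hτ
            rcases Finset.mem_union.mp hτ with h | h
            · exact Finset.mem_union_left _ (Finset.mem_image_of_mem inv h)
            · obtain ⟨a, ha, rfl⟩ := Finset.mem_image.mp h
              refine Finset.mem_union_right _ ?_
              have : inv (inv a) = a := hinv a
              rw [this]; exact ha
          · intro a ha
            rcases Finset.mem_union.mp ha with h | h
            · obtain ⟨τ, hτ, rfl⟩ := Finset.mem_image.mp h
              have : inv (inv τ) = τ := hinv τ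
              rw [this]; exact Finset.mem_union_left _ hτ
            · exact Finset.mem_union_right _ (Finset.mem_image_of_mem inv h)
          · intro τ _; exact hinv τ
          · intro a _; exact hinv a
          · intro τ _
            have h2 : inv (inv τ) = τ := hinv τ
            rw [hc]
            show H τ * ∏ i, (w S i) (u - τ i)
              = (∏ i, (w S i) (inv τ i)) * H (inv (inv τ))
            rw [h2, mul_comm]
        have hstep3 : ∑ a ∈ H.support.image inv ∪ P, c a * H (inv a)
            = ∑ a ∈ P, c a * H (inv a) := by
          refine (Finset.sum_subset Finset.subset_union_right fun a _ ha => ?_).symm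
          rw [hcz a ha, zero_mul]
        rw [hstep1, hstep2, hstep3]
      have hvec : fS S = ∑ a ∈ P, c a • g a := by
        funext t
        rw [Finset.sum_apply]
        simp only [Pi.smul_apply, smul_eq_mul]
        exact hkey (t : ℤ)
      have hgnorm : ∀ a : Fin n → ℤ, ‖E (g a)‖ ≤ sH := by
        intro a
        rw [hnormE, hsH]
        apply Real.sqrt_le_sqrt
        set e : ↥T → (Fin n → ℤ) := fun t i => (t : ℤ) - a i with he
        have hinj : ∀ t1 ∈ (Finset.univ : Finset ↥T), ∀ t2 ∈ (Finset.univ : Finset ↥T),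
            e t1 = e t2 → t1 = t2 := by
          intro t1 _ t2 _ hteq
          have : (t1 : ℤ) - a i₀ = (t2 : ℤ) - a i₀ := congrFun hteq i₀
          exact Subtype.ext (by omega)
        have h1 : ∑ t : ↥T, g a t ^ 2 = ∑ τ ∈ Finset.univ.image e, H τ ^ 2 :=
          (Finset.sum_image (f := fun τ => H τ ^ 2) hinj).symm
        rw [h1]
        have h2 : ∑ τ ∈ Finset.univ.image e ∩ H.support, H τ ^ 2
            = ∑ τ ∈ Finset.univ.image e, H τ ^ 2 := by
          refine Finset.sum_subset Finset.inter_subset_left fun τ _ hτ => ?_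
          have : τ ∉ H.support := fun h => hτ (Finset.mem_inter_of_mem ‹_› h)
          rw [Finsupp.notMem_support_iff.mp this]; ring
        rw [← h2]
        exact Finset.sum_le_sum_of_subset_of_nonneg Finset.inter_subset_right
          fun τ _ _ => sq_nonneg _
      have hsumabs : ∑ a ∈ P, |c a| = X ^ S.card * Y ^ (n - S.card) := by
        have habs : ∀ a ∈ P, |c a| = ∏ i, |(w S i) (a i)| := fun a _ => by
          rw [hc]; exact Finset.abs_prod _ _
        have hpus := Finset.prod_univ_sum (fun _ : Fin n => x.support ∪ y.support)
          (fun i b => |(w S i) b|)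
        rw [Finset.sum_congr rfl habs, hP, ← hpus]
        have hcol : ∀ i : Fin n,
            (∑ b ∈ x.support ∪ y.support, |(w S i) b|) = if i ∈ S then X else Y := by
          intro i
          simp only [hw]
          split
          · rw [hX]
            refine (Finset.sum_subset Finset.subset_union_left fun b _ hb => ?_).symm
            rw [Finsupp.notMem_support_iff.mp hb, abs_zero]
          · rw [hY]
            refine (Finset.sum_subset Finset.subset_union_right fun b _ hb => ?_).symm
            rw [Finsupp.notMem_support_iff.mp hb, abs_zero]
        rw [Finset.prod_congr rfl fun i _ => hcol i, Finset.prod_ite]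
        rw [Finset.prod_const, Finset.prod_const]
        have e1 : Finset.filter (fun i => i ∈ S) Finset.univ = S := by ext i; simp
        have e2 : (Finset.filter (fun i => ¬ i ∈ S) Finset.univ).card = n - S.card := by
          rw [show Finset.filter (fun i => ¬ i ∈ S) Finset.univ = Finset.univ \ S from by
                ext i; simp,
              Finset.card_sdiff_of_subset (Finset.subset_univ S), Finset.card_univ, Fintype.card_fin]
        rw [e1, e2]
      calc ‖E (fS S)‖ = ‖∑ a ∈ P, c a • E (g a)‖ := by
            rw [hvec, map_sum]
            congr 1
        _ ≤ ∑ a ∈ P, ‖c a • E (g a)‖ := norm_sum_le _ _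
        _ ≤ ∑ a ∈ P, |c a| * sH := by
            refine Finset.sum_le_sum fun a _ => ?_
            rw [norm_smul, Real.norm_eq_abs]
            exact mul_le_mul_of_nonneg_left (hgnorm a) (abs_nonneg _)
        _ = sH * ∑ a ∈ P, |c a| := by rw [← Finset.sum_mul, mul_comm]
        _ = sH * (X ^ S.card * Y ^ (n - S.card)) := by rw [hsumabs]
    have hcard : (Finset.univ : Finset (Fin n)).card = n := by
      rw [Finset.card_univ, Fintype.card_fin]
    calc ‖E (fun t : ↥T => D ↑t)‖ = ‖∑ S ∈ 𝒮, E (fS S)‖ := by rw [hdecomp, map_sum]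
      _ ≤ ∑ S ∈ 𝒮, ‖E (fS S)‖ := norm_sum_le _ _
      _ ≤ ∑ S ∈ 𝒮, sH * (X ^ S.card * Y ^ (n - S.card)) :=
          Finset.sum_le_sum fun S _ => hfSbound S
      _ = sH * ∑ S ∈ 𝒮, X ^ S.card * Y ^ (n - S.card) := by rw [← Finset.mul_sum]
      _ = sH * R := by
          congr 1
          have h1 : ∑ S ∈ (Finset.univ : Finset (Fin n)).powerset, (X ^ S.card * Y ^ (n - S.card))
              = ∑ k ∈ Finset.range (n + 1), (n.choose k : ℝ) * X ^ k * Y ^ (n - k) := by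
            rw [Finset.sum_powerset]
            refine Finset.sum_congr (by rw [hcard]) fun k _ => ?_
            have := Finset.sum_powersetCard k (Finset.univ : Finset (Fin n))
              (fun m => X ^ m * Y ^ (n - m))
            rw [hcard] at this
            rw [this, nsmul_eq_mul]; ring
          have h2 := Finset.sum_erase_add (Finset.univ : Finset (Fin n)).powerset
            (fun S : Finset (Fin n) => X ^ S.card * Y ^ (n - S.card))
            (Finset.mem_powerset_self Finset.univ)
          rw [← h𝒮] at h2
          have h3 : ∑ k ∈ Finset.range (n + 1), (n.choose k : ℝ) * X ^ k * Y ^ (n - k)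
              = R + X ^ n := by
            rw [Finset.sum_range_succ, hR]
            simp [Nat.choose_self]
          have h2' : ∑ S ∈ 𝒮, X ^ S.card * Y ^ (n - S.card) + X ^ n
              = ∑ S ∈ (Finset.univ : Finset (Fin n)).powerset, X ^ S.card * Y ^ (n - S.card) := by
            simpa [hcard] using h2
          linarith [h2', h1, h3]
  calc ‖E (fun t : ↥T => D ↑t)‖ ^ 2 ≤ (sH * R) ^ 2 :=
        pow_le_pow_left₀ (norm_nonneg _) hmain 2
end

section
/- Rank bound for two-dimensional convolution: for real matrices G and H (viewed as finitely supported kernels), the two-dimensional convolution (G * H)(t₁,t₂) = ∑_{τ₁,τ₂} G(τ₁,τ₂) H(t₁−τ₁, t₂−τ₂) satisfies rank(G * H) ≤ rank(G) · rank(H). -/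
/-- Zero padding of a finite matrix to a function on `ℤ × ℤ`. -/
noncomputable def padMat {a b : ℕ} (H : Matrix (Fin a) (Fin b) ℝ) : ℤ → ℤ → ℝ :=
  fun i j => if hij : 0 ≤ i ∧ i < a ∧ 0 ≤ j ∧ j < b then
    H ⟨i.toNat, by omega⟩ ⟨j.toNat, by omega⟩ else 0

/-- Zero padding of a finite vector to a function on `ℤ`. -/
noncomputable def padVec {n : ℕ} (u : Fin n → ℝ) : ℤ → ℝ :=
  fun i => if h : 0 ≤ i ∧ i < n then u ⟨i.toNat, by omega⟩ else 0

lemma rank_add_le' {m n : Type*} [Fintype m] [Fintype n] (A B : Matrix m n ℝ) :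
    (A + B).rank ≤ A.rank + B.rank := by
  rw [Matrix.rank, Matrix.rank, Matrix.rank, Matrix.mulVecLin_add]
  have h : LinearMap.range (A.mulVecLin + B.mulVecLin) ≤
      LinearMap.range A.mulVecLin ⊔ LinearMap.range B.mulVecLin := by
    rintro x ⟨v, rfl⟩
    exact Submodule.add_mem_sup ⟨v, rfl⟩ ⟨v, rfl⟩
  calc Module.finrank ℝ (LinearMap.range (A.mulVecLin + B.mulVecLin))
      ≤ Module.finrank ℝ ((LinearMap.range A.mulVecLin ⊔ LinearMap.range B.mulVecLin :
          Submodule ℝ (m → ℝ))) := Submodule.finrank_mono h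
    _ ≤ _ := Submodule.finrank_add_le_finrank_add_finrank _ _

lemma rank_sum_le' {m n ι : Type*} [Fintype m] [Fintype n] (s : Finset ι)
    (A : ι → Matrix m n ℝ) : (∑ i ∈ s, A i).rank ≤ ∑ i ∈ s, (A i).rank := by
  classical
  induction s using Finset.induction with
  | empty => simp [Matrix.rank_zero]
  | insert a s h ih =>
    rw [Finset.sum_insert h, Finset.sum_insert h]
    exact (rank_add_le' _ _).trans (by gcongr)

lemma exists_fact {m n : Type*} [Fintype m] [Fintype n] [DecidableEq n]
    (H : Matrix m n ℝ) :
    ∃ (U : Matrix m (Fin H.rank) ℝ) (C : Matrix (Fin H.rank) n ℝ), H = U * C := by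
  classical
  let V : Submodule ℝ (m → ℝ) := LinearMap.range H.mulVecLin
  let b : Module.Basis (Fin (Module.finrank ℝ V)) ℝ V := Module.finBasis ℝ V
  have hr : H.rank = Module.finrank ℝ V := rfl
  let col : n → V := fun j => ⟨H.mulVec (Pi.single j 1), ⟨Pi.single j 1, rfl⟩⟩
  refine ⟨fun i k => (b (Fin.cast hr k) : m → ℝ) i,
          fun k j => b.repr (col j) (Fin.cast hr k), ?_⟩
  ext i j
  have h1 : (col j : m → ℝ) i = H i j := by
    simp [col, Matrix.mulVec_single]
  have h2 := congrFun (congrArg Subtype.val (b.sum_repr (col j))) i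
  erw [Matrix.mul_apply]
  rw [← h1, ← h2]
  push_cast [Submodule.coe_sum]
  rw [Finset.sum_apply]
  rw [← Fintype.sum_bijective (Fin.cast hr) (finCongr hr).bijective]
  · simp [mul_comm]

theorem rank_conv2d (a₁ a₂ b₁ b₂ : ℕ)
    (G : Matrix (Fin a₁) (Fin a₂) ℝ) (H : Matrix (Fin b₁) (Fin b₂) ℝ) :
    let M : Matrix (Fin (a₁ + b₁ - 1)) (Fin (a₂ + b₂ - 1)) ℝ :=
      fun t₁ t₂ => ∑ τ₁ : Fin a₁, ∑ τ₂ : Fin a₂,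
        G τ₁ τ₂ * padMat H ((t₁ : ℤ) - (τ₁ : ℤ)) ((t₂ : ℤ) - (τ₂ : ℤ))
    M.rank ≤ G.rank * H.rank := by
  intro M
  obtain ⟨U, C, hH⟩ := exists_fact H
  -- pad decomposition
  have hpad : ∀ i j : ℤ, padMat H i j =
      ∑ k : Fin H.rank, padVec (fun i' => U i' k) i * padVec (C k) j := by
    intro i j
    unfold padMat padVec
    by_cases h1 : 0 ≤ i ∧ i < b₁
    · by_cases h2 : 0 ≤ j ∧ j < b₂
      · rw [dif_pos ⟨h1.1, h1.2, h2⟩]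
        conv_lhs => rw [hH]
        rw [Matrix.mul_apply]
        exact Finset.sum_congr rfl fun k _ => by rw [dif_pos h1, dif_pos h2]
      · rw [dif_neg (by tauto)]
        exact (Finset.sum_eq_zero fun k _ => by rw [dif_neg h2, mul_zero]).symm
    · rw [dif_neg (by tauto)]
      exact (Finset.sum_eq_zero fun k _ => by rw [dif_neg h1, zero_mul]).symm
  set A : Fin H.rank → Matrix (Fin (a₁ + b₁ - 1)) (Fin a₁) ℝ :=
    fun k t₁ τ₁ => padVec (fun i => U i k) ((t₁ : ℤ) - (τ₁ : ℤ)) with hA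
  set B : Fin H.rank → Matrix (Fin a₂) (Fin (a₂ + b₂ - 1)) ℝ :=
    fun k τ₂ t₂ => padVec (C k) ((t₂ : ℤ) - (τ₂ : ℤ)) with hB
  have hM : M = ∑ k : Fin H.rank, A k * G * B k := by
    ext t₁ t₂
    simp only [M, hpad, Finset.mul_sum, Finset.sum_apply, Matrix.sum_apply, Matrix.mul_apply,
      Finset.sum_mul]
    conv_lhs => enter [2, x]; rw [Finset.sum_comm]
    rw [Finset.sum_comm]
    refine Finset.sum_congr rfl fun k _ => ?_
    rw [Finset.sum_comm]
    refine (Finset.sum_congr rfl fun τ₂ _ =>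
      Finset.sum_congr rfl fun τ₁ _ => by simp only [hA, hB]; ring)
  calc M.rank ≤ ∑ k : Fin H.rank, (A k * G * B k).rank := by
        rw [hM]; exact rank_sum_le' _ _
    _ ≤ ∑ _k : Fin H.rank, G.rank := Finset.sum_le_sum fun k _ =>
        (Matrix.rank_mul_le_left _ _).trans (Matrix.rank_mul_le_right _ _)
    _ = H.rank * G.rank := by simp [Finset.sum_const, mul_comm]
    _ = G.rank * H.rank := mul_comm _ _
end
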